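/- Fix reals λ₁ > λ₂ > ... > λ_r > 0 and x with 0 < x ≤ ∑_{i=1}^r λ_i². Let s = s(x) be the unique index k ∈ {1,...,r} such that x lies in the interval I_k = ( ∑_{i=1}^k (λ_i² - λ_k²), ∑_{i=1}^{k+1}(λ_i² - λ_{k+1}²) ] (with the convention λ_{r+1} = 0). Define p*_i = 1 - (∑_{j=1}^s λ_j² - x)/(s λ_i²) for i ≤ s and p*_i = 0 for i > s. Then p* is feasible: 0 ≤ p*_i ≤ 1 for all i and ∑_i λ_i² p*_i = x. -/

import Mathlib

open Finset

/-- Feasibility of the water-filling point: with `s` (0-indexed) the index such that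
`x ∈ I_s`, the point `p*ᵢ = 1 - (∑_{j ≤ s} λⱼ² - x)/((s+1) λᵢ²)` for `i ≤ s`,
`p*ᵢ = 0` otherwise, satisfies `0 ≤ p*ᵢ ≤ 1` and `∑ᵢ λᵢ² p*ᵢ = x`. -/
theorem stmt6 (r s : ℕ) (lam : ℕ → ℝ)
    (hpos : ∀ i, i < r → 0 < lam i)
    (hdec : ∀ i j, i < j → j < r → lam j < lam i)
    (hzero : ∀ i, r ≤ i → lam i = 0)
    (x : ℝ) (hx : 0 < x) (hxle : x ≤ ∑ i ∈ range r, lam i ^ 2)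
    (hs : s < r)
    (hx1 : ∑ i ∈ range (s + 1), (lam i ^ 2 - lam s ^ 2) < x)
    (hx2 : x ≤ ∑ i ∈ range (s + 2), (lam i ^ 2 - lam (s + 1) ^ 2))
    (p : ℕ → ℝ)
    (hp : ∀ i, p i = if i ≤ s then
        1 - (∑ j ∈ range (s + 1), lam j ^ 2 - x) / ((s + 1 : ℝ) * lam i ^ 2) else 0) :
    (∀ i, i < r → 0 ≤ p i ∧ p i ≤ 1) ∧ ∑ i ∈ range r, lam i ^ 2 * p i = x := by
  set S := ∑ j ∈ range (s + 1), lam j ^ 2 with hS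
  have hsum1 : ∑ i ∈ range (s + 1), (lam i ^ 2 - lam s ^ 2)
      = S - (s + 1 : ℝ) * lam s ^ 2 := by
    rw [Finset.sum_sub_distrib, Finset.sum_const, card_range]; push_cast; ring
  have hsum2 : ∑ i ∈ range (s + 2), (lam i ^ 2 - lam (s + 1) ^ 2)
      = S - (s + 1 : ℝ) * lam (s + 1) ^ 2 := by
    rw [Finset.sum_sub_distrib, Finset.sum_const, card_range, Finset.sum_range_succ]
    push_cast [hS]; ring
  have hc0 : 0 ≤ S - x := by
    rw [hsum2] at hx2
    nlinarith [sq_nonneg (lam (s + 1)), Nat.cast_nonneg (α := ℝ) s]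
  have hc1 : S - x < (s + 1 : ℝ) * lam s ^ 2 := by
    rw [hsum1] at hx1; linarith
  have hbounds : ∀ i, i < r → 0 ≤ p i ∧ p i ≤ 1 := by
    intro i hi
    rw [hp i]
    by_cases his : i ≤ s
    · rw [if_pos his]
      have hli : 0 < lam i := hpos i hi
      have hls2 : lam s ^ 2 ≤ lam i ^ 2 := by
        rcases eq_or_lt_of_le his with h | h
        · rw [h]
        · have := hdec i s h hs
          nlinarith [hpos s hs]
      have hden : 0 < (s + 1 : ℝ) * lam i ^ 2 := by positivity
      constructor
      · have : (S - x) / ((s + 1 : ℝ) * lam i ^ 2) ≤ 1 := by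
          rw [div_le_one hden]
          nlinarith [Nat.cast_nonneg (α := ℝ) s]
        linarith
      · have : 0 ≤ (S - x) / ((s + 1 : ℝ) * lam i ^ 2) := div_nonneg hc0 hden.le
        linarith
    · rw [if_neg his]; norm_num
  refine ⟨hbounds, ?_⟩
  have hsplit : ∑ i ∈ range r, lam i ^ 2 * p i = ∑ i ∈ range (s + 1), lam i ^ 2 * p i := by
    rw [← Finset.sum_range_add_sum_Ico _ (by omega : s + 1 ≤ r)]
    have hz : ∑ i ∈ Ico (s + 1) r, lam i ^ 2 * p i = 0 := by
      refine Finset.sum_eq_zero fun i hi => ?_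
      rw [hp i, if_neg (by have := (Finset.mem_Ico.mp hi).1; omega)]; ring
    rw [hz, add_zero]
  rw [hsplit]
  have hterm : ∀ i ∈ range (s + 1), lam i ^ 2 * p i = lam i ^ 2 - (S - x) / (s + 1 : ℝ) := by
    intro i hi
    have hi' : i ≤ s := by simpa [Nat.lt_succ_iff] using Finset.mem_range.mp hi
    have hli : lam i ≠ 0 := (hpos i (by omega)).ne'
    have hs1 : (s + 1 : ℝ) ≠ 0 := by positivity
    rw [hp i, if_pos hi']
    field_simp
  rw [Finset.sum_congr rfl hterm, Finset.sum_sub_distrib, Finset.sum_const, card_range, ← hS]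
  rw [nsmul_eq_mul]; push_cast
  field_simp
  ring
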